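/- Let h ≥ 1 be an integer, set n = 2^h, let p, r be positive integers, set u_p = 2^(1−p) and u_{p+r} = 2^(1−p−r), and let a_1, …, a_n be real numbers with exact sum s = Σ_{i=1}^{n} a_i. On a probability space, for each level j = 1, …, h and each index i = 1, …, 2^(h−j), let δ^j_i and β^j_i be real random variables such that almost surely |δ^j_i| ≤ u_p, |β^j_i| ≤ u_{p+r}, and |δ^j_i − β^j_i| ≤ u_p, and such that the random variables α^j_i := δ^j_i − β^j_i, enumerated in the order of increasing level j (and increasing i within each level), are mean independent. Define the computed pairwise sum ŝ = Σ_{i=1}^{2^h} a_i ∏_{j=1}^{h} (1 + δ^j_{⌈i/2^j⌉}). Then for every 0 < λ < 1, with probability at least 1 − λ, |ŝ − s| ≤ (Σ_{i=1}^{n} |a_i|) · ( √(u_p · γ_{2h}(u_p)) · √(ln(2/λ)) + γ_h(u_p + u_{p+r}) − γ_h(u_p) ). -/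

import Mathlib

open MeasureTheory

namespace PairwiseSR



/-- ceiling index -/
def ci (l j : ℕ) : ℕ := (l + 2 ^ j - 1) / 2 ^ j

lemma ci_ge_one {l : ℕ} (hl : 1 ≤ l) (j : ℕ) : 1 ≤ ci l j := by
  have h2 : 0 < 2 ^ j := Nat.pow_pos (n := j) (by norm_num)
  rw [ci, Nat.le_div_iff_mul_le h2]
  omega

lemma ci_le {l h j : ℕ} (hl : l ≤ 2 ^ h) (hj : j ≤ h) : ci l j ≤ 2 ^ (h - j) := by
  have h2 : 0 < 2 ^ j := Nat.pow_pos (n := j) (by norm_num)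
  have hpow : 2 ^ (h - j) * 2 ^ j = 2 ^ h := by
    rw [← pow_add]; congr 1; omega
  rw [ci, Nat.div_le_iff_le_mul_add_pred h2]
  have hpow2 : 2 ^ j * 2 ^ (h - j) = 2 ^ h := by rw [← pow_add]; congr 1; omega
  omega

lemma telescope (n : ℕ) (g : ℕ → ℝ) :
    ∏ j ∈ Finset.Icc 1 n, (1 + g j) - 1 =
      ∑ j ∈ Finset.Icc 1 n, g j * ∏ j' ∈ Finset.Icc 1 (j - 1), (1 + g j') := by
  induction n with
  | zero => simp
  | succ n ih =>
    have hins : Finset.Icc 1 (n + 1) = insert (n + 1) (Finset.Icc 1 n) := by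
      rw [Finset.insert_Icc_right_eq_Icc_add_one (by omega)]
    rw [hins, Finset.prod_insert (by simp), Finset.sum_insert (by simp)]
    have : (n + 1) - 1 = n := by omega
    rw [this]
    nlinarith [ih]

lemma bias_bound (u v : ℝ) (hu : 0 ≤ u) (hv : 0 ≤ v) (n : ℕ) (c d : ℕ → ℝ)
    (hc : ∀ j ∈ Finset.Icc 1 n, |c j| ≤ u) (hd : ∀ j ∈ Finset.Icc 1 n, |d j| ≤ u)
    (hdc : ∀ j ∈ Finset.Icc 1 n, |d j - c j| ≤ v) :
    |∏ j ∈ Finset.Icc 1 n, (1 + d j) - ∏ j ∈ Finset.Icc 1 n, (1 + c j)| ≤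
      (1 + u + v) ^ n - (1 + u) ^ n := by
  induction n with
  | zero => simp
  | succ n ih =>
    have hins : Finset.Icc 1 (n + 1) = insert (n + 1) (Finset.Icc 1 n) := by
      rw [Finset.insert_Icc_right_eq_Icc_add_one (by omega)]
    have hmem : ∀ j ∈ Finset.Icc 1 n, j ∈ Finset.Icc 1 (n+1) := by
      intro j hj; simp only [Finset.mem_Icc] at *; omega
    have ihn := ih (fun j hj => hc j (hmem j hj)) (fun j hj => hd j (hmem j hj))
      (fun j hj => hdc j (hmem j hj))
    rw [hins, Finset.prod_insert (by simp), Finset.prod_insert (by simp)]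
    have hsucc : (n+1) ∈ Finset.Icc 1 (n+1) := by simp
    have hc1 := hc _ hsucc
    have hd1 := hd _ hsucc
    have hdc1 := hdc _ hsucc
    set P := ∏ j ∈ Finset.Icc 1 n, (1 + d j)
    set Q := ∏ j ∈ Finset.Icc 1 n, (1 + c j)
    have hQ : |Q| ≤ (1 + u) ^ n := by
      rw [show |Q| = ∏ j ∈ Finset.Icc 1 n, |1 + c j| from (Finset.abs_prod _ _)]
      calc ∏ j ∈ Finset.Icc 1 n, |1 + c j| ≤ ∏ j ∈ Finset.Icc 1 n, (1 + u) := by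
            apply Finset.prod_le_prod (fun j _ => abs_nonneg _)
            intro j hj
            have := hc j (hmem j hj)
            have := abs_le.mp this
            rw [abs_le]; constructor <;> nlinarith
        _ = (1 + u) ^ n := by rw [Finset.prod_const, Nat.card_Icc]; norm_num
    have key : (1 + d (n+1)) * P - (1 + c (n+1)) * Q
        = (P - Q) * (1 + d (n+1)) + Q * (d (n+1) - c (n+1)) := by ring
    rw [key]
    have h1d : |1 + d (n+1)| ≤ 1 + u := by
      have := abs_le.mp hd1; rw [abs_le]; constructor <;> nlinarith
    have hmono : (1 + u) ^ n ≤ (1 + u + v) ^ n :=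
      pow_le_pow_left₀ (by linarith) (by linarith) n
    calc |(P - Q) * (1 + d (n+1)) + Q * (d (n+1) - c (n+1))|
        ≤ |P - Q| * |1 + d (n+1)| + |Q| * |d (n+1) - c (n+1)| := by
          refine (abs_add_le _ _).trans ?_
          rw [abs_mul, abs_mul]
      _ ≤ ((1 + u + v) ^ n - (1 + u) ^ n) * (1 + u) + (1 + u) ^ n * v := by
          gcongr <;> first | exact abs_nonneg _ | linarith [abs_nonneg (P - Q), abs_nonneg Q]
      _ ≤ ((1 + u + v) ^ n - (1 + u) ^ n) * (1 + u + v) + (1 + u) ^ n * v := by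
          have : (0:ℝ) ≤ (1 + u + v) ^ n - (1 + u) ^ n := by linarith
          nlinarith
      _ = (1 + u + v) ^ (n+1) - (1 + u) ^ (n+1) := by ring




variable {Ω : Type*} [MeasurableSpace Ω]

/-- product of `(1 + x)` factors along the path of leaf `l` strictly below level `j` -/
noncomputable def Pp (x : ℕ → ℕ → Ω → ℝ) (j l : ℕ) (ω : Ω) : ℝ :=
  ∏ j' ∈ Finset.Icc 1 (j - 1), (1 + x j' (ci l j') ω)

def fib (h j i : ℕ) : Finset ℕ := (Finset.Icc 1 (2 ^ h)).filter fun l => ci l j = i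

noncomputable def Tf (a : ℕ → ℝ) (x : ℕ → ℕ → Ω → ℝ) (h j i : ℕ) (ω : Ω) : ℝ :=
  ∑ l ∈ fib h j i, a l * Pp x j l ω

noncomputable def Af (a : ℕ → ℝ) (h j i : ℕ) : ℝ := ∑ l ∈ fib h j i, |a l|

lemma identity (h : ℕ) (a : ℕ → ℝ) (x : ℕ → ℕ → Ω → ℝ) (ω : Ω) :
    (∑ l ∈ Finset.Icc 1 (2 ^ h), a l * ∏ j ∈ Finset.Icc 1 h, (1 + x j (ci l j) ω)) -
      ∑ l ∈ Finset.Icc 1 (2 ^ h), a l =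
    ∑ j ∈ Finset.Icc 1 h, ∑ i ∈ Finset.Icc 1 (2 ^ (h - j)),
      Tf a x h j i ω * x j i ω := by
  rw [← Finset.sum_sub_distrib]
  have step1 : ∀ l ∈ Finset.Icc 1 (2 ^ h),
      a l * ∏ j ∈ Finset.Icc 1 h, (1 + x j (ci l j) ω) - a l =
      ∑ j ∈ Finset.Icc 1 h, a l * (x j (ci l j) ω * Pp x j l ω) := by
    intro l _
    simp only [Pp]
    rw [← Finset.mul_sum, ← telescope h (fun j => x j (ci l j) ω)]
    ring
  rw [Finset.sum_congr rfl step1, Finset.sum_comm]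
  refine Finset.sum_congr rfl fun j hj => ?_
  have hmaps : ∀ l ∈ Finset.Icc 1 (2 ^ h), ci l j ∈ Finset.Icc 1 (2 ^ (h - j)) := by
    intro l hl
    simp only [Finset.mem_Icc] at hl ⊢
    simp only [Finset.mem_Icc] at hj
    exact ⟨ci_ge_one hl.1 j, ci_le hl.2 hj.2⟩
  rw [← Finset.sum_fiberwise_of_maps_to hmaps]
  refine Finset.sum_congr rfl fun i _ => ?_
  rw [Tf, Finset.sum_mul]
  refine Finset.sum_congr rfl fun l hl => ?_
  rw [fib, Finset.mem_filter] at hl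
  rw [hl.2]; ring




variable {Ω : Type*} {m : MeasurableSpace Ω} [mΩ : MeasurableSpace Ω] {μ : Measure Ω}
  [IsProbabilityMeasure μ]

lemma integrable_of_ae_bdd {f : Ω → ℝ} (hf : AEStronglyMeasurable f μ) {C : ℝ}
    (hbd : ∀ᵐ ω ∂μ, |f ω| ≤ C) : Integrable f μ := by
  refine Integrable.mono' (integrable_const C) hf ?_
  filter_upwards [hbd] with ω hω
  simpa [Real.norm_eq_abs] using hω

/-- Conditional Hoeffding lemma. -/
lemma condexp_exp_le (hm : m ≤ mΩ) {Y : Ω → ℝ}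
    (hYmeas : Measurable[mΩ] Y) {b : ℝ} (hYbd : ∀ᵐ ω ∂μ, |Y ω| ≤ b)
    (hY0 : μ[Y|m] =ᵐ[μ] 0) (s : ℝ) :
    μ[fun ω => Real.exp (s * Y ω)|m] ≤ᵐ[μ] fun _ => Real.exp (s ^ 2 * b ^ 2 / 2) := by
  haveI : SigmaFinite (μ.trim hm) := by
    have : IsFiniteMeasure (μ.trim hm) := isFiniteMeasure_trim hm
    infer_instance
  have hb : 0 ≤ b := by
    obtain ⟨ω, hω⟩ := hYbd.exists
    exact (abs_nonneg _).trans hω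
  have hYint : Integrable Y μ := integrable_of_ae_bdd hYmeas.aestronglyMeasurable hYbd
  have hEmeas : Measurable[mΩ] fun ω => Real.exp (s * Y ω) :=
    (Real.measurable_exp.comp (hYmeas.const_mul s))
  have hEbd : ∀ᵐ ω ∂μ, |Real.exp (s * Y ω)| ≤ Real.exp (|s| * b) := by
    filter_upwards [hYbd] with ω hω
    rw [abs_of_pos (Real.exp_pos _)]
    apply Real.exp_le_exp.mpr
    calc s * Y ω ≤ |s * Y ω| := le_abs_self _
      _ = |s| * |Y ω| := abs_mul _ _
      _ ≤ |s| * b := by gcongr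
  have hEint : Integrable (fun ω => Real.exp (s * Y ω)) μ :=
    integrable_of_ae_bdd hEmeas.aestronglyMeasurable hEbd
  rcases eq_or_lt_of_le hb with hb0 | hbpos
  · -- b = 0 : Y = 0 a.e.
    have hY0' : ∀ᵐ ω ∂μ, Y ω = 0 := by
      filter_upwards [hYbd] with ω hω
      rw [← hb0] at hω
      exact abs_eq_zero.mp (le_antisymm hω (abs_nonneg _))
    have : (fun ω => Real.exp (s * Y ω)) =ᵐ[μ] fun _ => (1 : ℝ) := by
      filter_upwards [hY0'] with ω hω; simp [hω]
    calc μ[fun ω => Real.exp (s * Y ω)|m] =ᵐ[μ] μ[fun _ => (1:ℝ)|m] := condExp_congr_ae this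
      _ = fun _ => (1:ℝ) := condExp_const hm 1
      _ ≤ᵐ[μ] fun _ => Real.exp (s ^ 2 * b ^ 2 / 2) := by
          refine Filter.Eventually.of_forall fun ω => ?_
          rw [show (1:ℝ) = Real.exp 0 by simp]
          exact Real.exp_le_exp.mpr (by positivity)
  · -- b > 0
    set cSh : ℝ := Real.cosh (s * b)
    set sSh : ℝ := Real.sinh (s * b) / b
    have hptwise : ∀ᵐ ω ∂μ, Real.exp (s * Y ω) ≤ cSh + sSh * Y ω := by
      filter_upwards [hYbd] with ω hω
      obtain ⟨h1, h2⟩ := abs_le.mp hω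
      have key := convexOn_exp.2 (Set.mem_univ (s * b)) (Set.mem_univ (-(s * b)))
        (show (0:ℝ) ≤ (b + Y ω) / (2 * b) from div_nonneg (by linarith) (by linarith))
        (show (0:ℝ) ≤ (b - Y ω) / (2 * b) from div_nonneg (by linarith) (by linarith))
        (show (b + Y ω) / (2 * b) + (b - Y ω) / (2 * b) = 1 by
          rw [← add_div, div_eq_one_iff_eq (by positivity)]; ring)
      simp only [smul_eq_mul] at key
      have harg : (b + Y ω) / (2 * b) * (s * b) + (b - Y ω) / (2 * b) * (-(s * b)) = s * Y ω := by
        field_simp; ring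
      rw [harg] at key
      refine key.trans (le_of_eq ?_)
      simp only [cSh, sSh, Real.cosh_eq, Real.sinh_eq]
      field_simp
      ring
    have hRHSint : Integrable (fun ω => cSh + sSh * Y ω) μ :=
      (integrable_const cSh).add (hYint.const_mul sSh)
    calc μ[fun ω => Real.exp (s * Y ω)|m]
        ≤ᵐ[μ] μ[fun ω => cSh + sSh * Y ω|m] := condExp_mono hEint hRHSint hptwise
      _ =ᵐ[μ] fun _ => cSh := by
          have h1 : μ[fun ω => cSh + sSh * Y ω|m] =ᵐ[μ]
              μ[fun _ => cSh|m] + μ[fun ω => sSh * Y ω|m] :=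
            condExp_add (integrable_const cSh) (hYint.const_mul sSh) m
          have h2 : μ[fun ω => sSh * Y ω|m] =ᵐ[μ] sSh • μ[Y|m] := condExp_smul sSh Y m
          filter_upwards [h1, h2, hY0] with ω hω1 hω2 hω3
          simp only [Pi.add_apply, hω1, hω2, Pi.smul_apply, smul_eq_mul, hω3, Pi.zero_apply,
            mul_zero, add_zero, condExp_const hm]
      _ ≤ᵐ[μ] fun _ => Real.exp (s ^ 2 * b ^ 2 / 2) := by
          refine Filter.Eventually.of_forall fun ω => ?_
          calc cSh ≤ Real.exp ((s * b) ^ 2 / 2) := Real.cosh_le_exp_half_sq _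
            _ = Real.exp (s ^ 2 * b ^ 2 / 2) := by rw [mul_pow]

/-- One step of the supermartingale MGF bound. -/
lemma mgf_step (hm : m ≤ mΩ) {X Y : Ω → ℝ}
    (hXm : StronglyMeasurable[m] X) (hX0 : ∀ ω, 0 ≤ X ω) {CX : ℝ}
    (hXbd : ∀ᵐ ω ∂μ, X ω ≤ CX)
    (hYmeas : Measurable[mΩ] Y) {b : ℝ} (hYbd : ∀ᵐ ω ∂μ, |Y ω| ≤ b)
    (hY0 : μ[Y|m] =ᵐ[μ] 0) (s : ℝ) :
    ∫ ω, X ω * Real.exp (s * Y ω) ∂μ ≤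
      (∫ ω, X ω ∂μ) * Real.exp (s ^ 2 * b ^ 2 / 2) := by
  haveI : SigmaFinite (μ.trim hm) := by
    have : IsFiniteMeasure (μ.trim hm) := isFiniteMeasure_trim hm
    infer_instance
  have hb : 0 ≤ b := by
    obtain ⟨ω, hω⟩ := hYbd.exists
    exact (abs_nonneg _).trans hω
  have hXmeas : Measurable[mΩ] X := hXm.measurable.mono hm le_rfl
  have hEmeas : Measurable[mΩ] fun ω => Real.exp (s * Y ω) :=
    Real.measurable_exp.comp (hYmeas.const_mul s)
  have hEbd : ∀ᵐ ω ∂μ, |Real.exp (s * Y ω)| ≤ Real.exp (|s| * b) := by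
    filter_upwards [hYbd] with ω hω
    rw [abs_of_pos (Real.exp_pos _)]
    apply Real.exp_le_exp.mpr
    calc s * Y ω ≤ |s * Y ω| := le_abs_self _
      _ = |s| * |Y ω| := abs_mul _ _
      _ ≤ |s| * b := by gcongr
  have hEint : Integrable (fun ω => Real.exp (s * Y ω)) μ :=
    integrable_of_ae_bdd hEmeas.aestronglyMeasurable hEbd
  have hXint : Integrable X μ := integrable_of_ae_bdd hXmeas.aestronglyMeasurable
    (by filter_upwards [hXbd] with ω hω; rw [abs_of_nonneg (hX0 ω)]; exact hω)
  have hXYint : Integrable (fun ω => X ω * Real.exp (s * Y ω)) μ := by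
    refine integrable_of_ae_bdd (hXmeas.mul hEmeas).aestronglyMeasurable
      (C := CX * Real.exp (|s| * b)) ?_
    filter_upwards [hXbd, hEbd] with ω h1 h2
    rw [abs_mul, abs_of_nonneg (hX0 ω)]
    calc X ω * |Real.exp (s * Y ω)| ≤ CX * Real.exp (|s| * b) := by
          apply mul_le_mul h1 h2 (abs_nonneg _)
          exact le_trans (hX0 _) h1
      _ = CX * Real.exp (|s| * b) := rfl
  have pull := condExp_mul_of_stronglyMeasurable_left (μ := μ) (m := m) hXm hXYint hEint
  have hcond := condexp_exp_le (μ := μ) hm hYmeas hYbd hY0 s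
  calc ∫ ω, X ω * Real.exp (s * Y ω) ∂μ
      = ∫ ω, (μ[fun ω => X ω * Real.exp (s * Y ω)|m]) ω ∂μ :=
        (integral_condExp hm).symm
    _ = ∫ ω, X ω * (μ[fun ω => Real.exp (s * Y ω)|m]) ω ∂μ := integral_congr_ae pull
    _ ≤ ∫ ω, X ω * Real.exp (s ^ 2 * b ^ 2 / 2) ∂μ := by
        refine integral_mono_ae (Integrable.congr integrable_condExp pull)
          (hXint.mul_const _) ?_
        have hcnn : 0 ≤ᵐ[μ] μ[fun ω => Real.exp (s * Y ω)|m] :=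
          condExp_nonneg (Filter.Eventually.of_forall fun ω => (Real.exp_pos _).le)
        filter_upwards [hcond, hcnn] with ω h1 h2
        exact mul_le_mul_of_nonneg_left h1 (hX0 ω)
    _ = (∫ ω, X ω ∂μ) * Real.exp (s ^ 2 * b ^ 2 / 2) := integral_mul_const _ _


variable {Ω : Type*}

section Defs
variable [mΩ : MeasurableSpace Ω]

noncomputable def Dp
 (a : ℕ → ℝ) (x : ℕ → ℕ → Ω → ℝ) (h j i : ℕ) (ω : Ω) : ℝ :=
  Tf a x h j i ω * x j i ω

noncomputable def G1 (a : ℕ → ℝ) (x : ℕ → ℕ → Ω → ℝ) (h j : ℕ) (ω : Ω) : ℝ :=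
  ∑ j' ∈ Finset.Icc 1 j, ∑ i' ∈ Finset.Icc 1 (2 ^ (h - j')), Dp a x h j' i' ω

noncomputable def G2 (a : ℕ → ℝ) (x : ℕ → ℕ → Ω → ℝ) (h j i : ℕ) (ω : Ω) : ℝ :=
  G1 a x h (j - 1) ω + ∑ i' ∈ Finset.Icc 1 i, Dp a x h j i' ω

def nodeSet (h j i : ℕ) : Set (ℕ × ℕ) :=
  {q : ℕ × ℕ | (1 ≤ q.1 ∧ q.1 ≤ h ∧ 1 ≤ q.2 ∧ q.2 ≤ 2 ^ (h - q.1)) ∧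
    (q.1 < j ∨ (q.1 = j ∧ q.2 < i))}

def Falg (h : ℕ) (x : ℕ → ℕ → Ω → ℝ) (j i : ℕ) : MeasurableSpace Ω :=
  ⨆ q ∈ nodeSet h j i, MeasurableSpace.comap (x q.1 q.2) inferInstance

end Defs

noncomputable def bC (a : ℕ → ℝ) (u : ℝ) (h j i : ℕ) : ℝ := u * (1 + u) ^ (j - 1) * Af a h j i

noncomputable def V1 (a : ℕ → ℝ) (u : ℝ) (h j : ℕ) : ℝ :=
  ∑ j' ∈ Finset.Icc 1 j, ∑ i' ∈ Finset.Icc 1 (2 ^ (h - j')), (bC a u h j' i') ^ 2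

noncomputable def V2 (a : ℕ → ℝ) (u : ℝ) (h j i : ℕ) : ℝ :=
  V1 a u h (j - 1) + ∑ i' ∈ Finset.Icc 1 i, (bC a u h j i') ^ 2

noncomputable def Ball (a : ℕ → ℝ) (u : ℝ) (h : ℕ) : ℝ :=
  ∑ j ∈ Finset.Icc 1 h, ∑ i ∈ Finset.Icc 1 (2 ^ (h - j)), bC a u h j i

lemma Af_nonneg (a : ℕ → ℝ) (h j i : ℕ) : 0 ≤ Af a h j i :=
  Finset.sum_nonneg fun _ _ => abs_nonneg _

lemma bC_nonneg {u : ℝ} (hu : 0 ≤ u) (a : ℕ → ℝ) (h j i : ℕ) : 0 ≤ bC a u h j i := by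
  apply mul_nonneg (mul_nonneg hu (pow_nonneg (by linarith) _)) (Af_nonneg a h j i)

section Meas
variable [mΩ : MeasurableSpace Ω] {h J I : ℕ} {a : ℕ → ℝ} {x : ℕ → ℕ → Ω → ℝ} {u : ℝ}

lemma Falg_le (hx : ∀ j i, Measurable (x j i)) : Falg h x J I ≤ mΩ :=
  iSup₂_le fun q _ => (hx q.1 q.2).comap_le

lemma meas_node {q : ℕ × ℕ} (hq : q ∈ nodeSet h J I) :
    Measurable[Falg h x J I] (x q.1 q.2) :=
  measurable_iff_comap_le.2
    (le_iSup₂ (f := fun q (_ : q ∈ nodeSet h J I) =>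
      MeasurableSpace.comap (x q.1 q.2) inferInstance) q hq)

lemma Tf_meas_falg (hJh : J ≤ h) {jq iq : ℕ} (hjq : 1 ≤ jq) (hjqJ : jq ≤ J) :
    Measurable[Falg h x J I] (Tf a x h jq iq) := by
  apply Finset.measurable_sum
  intro l hl
  apply Measurable.const_mul
  apply Finset.measurable_prod
  intro j' hj'
  simp only [Finset.mem_Icc] at hj'
  rw [fib, Finset.mem_filter, Finset.mem_Icc] at hl
  apply Measurable.const_add
  refine meas_node (q := (j', ci l j')) ⟨⟨hj'.1, by omega, ci_ge_one hl.1.1 j',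
    ci_le hl.1.2 (by omega)⟩, Or.inl (by omega)⟩

lemma Dp_meas_falg (hJh : J ≤ h) {jq iq : ℕ} (hmem : (jq, iq) ∈ nodeSet h J I) :
    Measurable[Falg h x J I] (Dp a x h jq iq) := by
  have hnode := hmem.1
  exact (Tf_meas_falg hJh hnode.1 (by rcases hmem.2 with h1 | h1 <;> omega)).mul
    (meas_node (q := (jq, iq)) hmem)

lemma G2_meas_falg {j i : ℕ} (hj1 : 1 ≤ j) (hjJ : j = J) (hiI : i < I)
    (hJh : J ≤ h) (hi : i ≤ 2 ^ (h - j)) :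
    Measurable[Falg h x J I] (fun ω => G2 a x h j i ω) := by
  apply Measurable.add
  · apply Finset.measurable_sum
    intro j' hj'
    apply Finset.measurable_sum
    intro i' hi'
    simp only [Finset.mem_Icc] at hj' hi'
    apply Dp_meas_falg hJh
    simp only [nodeSet, Set.mem_setOf_eq]
    exact ⟨⟨hj'.1, by omega, hi'.1, hi'.2⟩, Or.inl (by omega)⟩
  · apply Finset.measurable_sum
    intro i' hi'
    simp only [Finset.mem_Icc] at hi'
    apply Dp_meas_falg hJh
    simp only [nodeSet, Set.mem_setOf_eq]
    exact ⟨⟨by omega, by omega, hi'.1, by omega⟩, Or.inr ⟨hjJ, by omega⟩⟩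

end Meas

section PtBounds
variable [mΩ : MeasurableSpace Ω] {h : ℕ} {a : ℕ → ℝ} {x : ℕ → ℕ → Ω → ℝ} {u : ℝ}

/-- pointwise bound on `Tf` for a good sample. -/
lemma Tf_abs_le {ω : Ω} (hu : 0 ≤ u)
    (hω : ∀ j' ∈ Finset.Icc 1 h, ∀ i' ∈ Finset.Icc 1 (2 ^ (h - j')), |x j' i' ω| ≤ u)
    {j i : ℕ} (hj : j ≤ h) : |Tf a x h j i ω| ≤ (1 + u) ^ (j - 1) * Af a h j i := by
  rw [Tf, Af, Finset.mul_sum]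
  refine (Finset.abs_sum_le_sum_abs _ _).trans (Finset.sum_le_sum fun l hl => ?_)
  rw [abs_mul, mul_comm ((1+u)^(j-1))]
  apply mul_le_mul_of_nonneg_left ?_ (abs_nonneg _)
  rw [Pp, Finset.abs_prod]
  calc ∏ j' ∈ Finset.Icc 1 (j-1), |1 + x j' (ci l j') ω|
      ≤ ∏ j' ∈ Finset.Icc 1 (j-1), (1 + u) := by
        apply Finset.prod_le_prod (fun _ _ => abs_nonneg _)
        intro j' hj'
        simp only [Finset.mem_Icc] at hj'
        rw [fib, Finset.mem_filter, Finset.mem_Icc] at hl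
        have hb := hω j' (by simp only [Finset.mem_Icc]; omega) (ci l j')
          (by simp only [Finset.mem_Icc];
              exact ⟨ci_ge_one hl.1.1 j', ci_le hl.1.2 (by omega)⟩)
        have := abs_le.mp hb
        rw [abs_le]; constructor <;> linarith
    _ = (1 + u) ^ (j - 1) := by rw [Finset.prod_const, Nat.card_Icc]; norm_num
  done

lemma Dp_abs_le {ω : Ω} (hu : 0 ≤ u)
    (hω : ∀ j' ∈ Finset.Icc 1 h, ∀ i' ∈ Finset.Icc 1 (2 ^ (h - j')), |x j' i' ω| ≤ u)
    {j i : ℕ} (hj1 : 1 ≤ j) (hj : j ≤ h) (hi1 : 1 ≤ i) (hi : i ≤ 2 ^ (h - j)) :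
    |Dp a x h j i ω| ≤ bC a u h j i := by
  rw [Dp, bC, abs_mul]
  have h1 := Tf_abs_le (a := a) hu hω hj (i := i)
  have h2 := hω j (by simp only [Finset.mem_Icc]; omega) i (by simp only [Finset.mem_Icc]; omega)
  calc |Tf a x h j i ω| * |x j i ω| ≤ ((1 + u) ^ (j - 1) * Af a h j i) * u := by
        apply mul_le_mul h1 h2 (abs_nonneg _)
        exact mul_nonneg (pow_nonneg (by linarith) _) (Af_nonneg a h j i)
    _ = u * (1 + u) ^ (j - 1) * Af a h j i := by ring

lemma G2_abs_le {ω : Ω} (hu : 0 ≤ u)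
    (hω : ∀ j' ∈ Finset.Icc 1 h, ∀ i' ∈ Finset.Icc 1 (2 ^ (h - j')), |x j' i' ω| ≤ u)
    {j i : ℕ} (hj1 : 1 ≤ j) (hj : j ≤ h) (hi : i ≤ 2 ^ (h - j)) :
    |G2 a x h j i ω| ≤ Ball a u h := by
  have hDp : ∀ j' ∈ Finset.Icc 1 h, ∀ i' ∈ Finset.Icc 1 (2 ^ (h - j')),
      |Dp a x h j' i' ω| ≤ bC a u h j' i' := by
    intro j' hj' i' hi'
    simp only [Finset.mem_Icc] at hj' hi'
    exact Dp_abs_le hu hω hj'.1 hj'.2 hi'.1 hi'.2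
  rw [G2]
  have tri1 : |G1 a x h (j-1) ω| ≤
      ∑ j' ∈ Finset.Icc 1 (j-1), ∑ i' ∈ Finset.Icc 1 (2 ^ (h - j')), bC a u h j' i' := by
    rw [G1]
    refine (Finset.abs_sum_le_sum_abs _ _).trans (Finset.sum_le_sum fun j' hj' => ?_)
    refine (Finset.abs_sum_le_sum_abs _ _).trans (Finset.sum_le_sum fun i' hi' => ?_)
    simp only [Finset.mem_Icc] at hj'
    exact hDp j' (by simp only [Finset.mem_Icc]; omega) i' hi'
  have tri2 : |∑ i' ∈ Finset.Icc 1 i, Dp a x h j i' ω| ≤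
      ∑ i' ∈ Finset.Icc 1 (2 ^ (h - j)), bC a u h j i' := by
    refine (Finset.abs_sum_le_sum_abs _ _).trans ?_
    refine le_trans (Finset.sum_le_sum fun i' hi' => ?_)
      (Finset.sum_le_sum_of_subset_of_nonneg
        (Finset.Icc_subset_Icc_right hi) (fun i' _ _ => bC_nonneg hu a h j i'))
    simp only [Finset.mem_Icc] at hi'
    exact hDp j (by simp only [Finset.mem_Icc]; omega) i'
      (by simp only [Finset.mem_Icc]; omega)
  have hsplit : (∑ j' ∈ Finset.Icc 1 (j-1), ∑ i' ∈ Finset.Icc 1 (2 ^ (h - j')), bC a u h j' i')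
      + ∑ i' ∈ Finset.Icc 1 (2 ^ (h - j)), bC a u h j i' ≤ Ball a u h := by
    rw [Ball]
    have hIccj : Finset.Icc 1 j = insert j (Finset.Icc 1 (j-1)) := by
      ext k; simp only [Finset.mem_Icc, Finset.mem_insert]; omega
    have hsub : (∑ j' ∈ Finset.Icc 1 j, ∑ i' ∈ Finset.Icc 1 (2 ^ (h - j')), bC a u h j' i')
        ≤ ∑ j' ∈ Finset.Icc 1 h, ∑ i' ∈ Finset.Icc 1 (2 ^ (h - j')), bC a u h j' i' := by
      apply Finset.sum_le_sum_of_subset_of_nonneg (Finset.Icc_subset_Icc_right hj)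
      intro j' _ _
      exact Finset.sum_nonneg fun i' _ => bC_nonneg hu a h j' i'
    calc _ = ∑ j' ∈ Finset.Icc 1 j, ∑ i' ∈ Finset.Icc 1 (2 ^ (h - j')), bC a u h j' i' := by
          rw [hIccj, Finset.sum_insert (by simp only [Finset.mem_Icc]; omega), add_comm]
      _ ≤ _ := hsub
  calc |G1 a x h (j-1) ω + ∑ i' ∈ Finset.Icc 1 i, Dp a x h j i' ω|
      ≤ |G1 a x h (j-1) ω| + |∑ i' ∈ Finset.Icc 1 i, Dp a x h j i' ω| := abs_add_le _ _
    _ ≤ _ := by linarith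

lemma G1_abs_le {ω : Ω} (hu : 0 ≤ u)
    (hω : ∀ j' ∈ Finset.Icc 1 h, ∀ i' ∈ Finset.Icc 1 (2 ^ (h - j')), |x j' i' ω| ≤ u) :
    |G1 a x h h ω| ≤ Ball a u h := by
  rw [G1, Ball]
  refine (Finset.abs_sum_le_sum_abs _ _).trans (Finset.sum_le_sum fun j hj => ?_)
  refine (Finset.abs_sum_le_sum_abs _ _).trans (Finset.sum_le_sum fun i hi => ?_)
  simp only [Finset.mem_Icc] at hj hi
  exact Dp_abs_le hu hω hj.1 hj.2 hi.1 hi.2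

end PtBounds


section MGF
variable [mΩ : MeasurableSpace Ω] {μ : Measure Ω} [IsProbabilityMeasure μ]
  {h : ℕ} {a : ℕ → ℝ} {x : ℕ → ℕ → Ω → ℝ} {u : ℝ}

lemma Tf_meas (hx : ∀ j i, Measurable (x j i)) (j i : ℕ) :
    Measurable[mΩ] (Tf a x h j i) := by
  apply Finset.measurable_sum
  intro l _
  exact ((Finset.measurable_prod _ fun j' _ => (hx j' (ci l j')).const_add 1).const_mul (a l))

lemma G2_succ (J i : ℕ) (ω : Ω) :
    G2 a x h J (i + 1) ω = G2 a x h J i ω + Dp a x h J (i + 1) ω := by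
  rw [G2, G2, ← Finset.insert_Icc_right_eq_Icc_add_one (by omega),
    Finset.sum_insert (by simp only [Finset.mem_Icc]; omega)]
  ring

lemma V2_succ (J i : ℕ) :
    V2 a u h J (i + 1) = V2 a u h J i + (bC a u h J (i + 1)) ^ 2 := by
  rw [V2, V2, ← Finset.insert_Icc_right_eq_Icc_add_one (by omega),
    Finset.sum_insert (by simp only [Finset.mem_Icc]; omega)]
  ring

lemma G1_eq_G2 (j : ℕ) (ω : Ω) :
    G1 a x h (j + 1) ω = G2 a x h (j + 1) (2 ^ (h - (j + 1))) ω := by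
  rw [G2, G1, ← Finset.insert_Icc_right_eq_Icc_add_one (by omega),
    Finset.sum_insert (by simp only [Finset.mem_Icc]; omega)]
  simp only [Nat.add_sub_cancel, G1]
  ring

lemma V1_eq_V2 (j : ℕ) :
    V1 a u h (j + 1) = V2 a u h (j + 1) (2 ^ (h - (j + 1))) := by
  rw [V2, V1, ← Finset.insert_Icc_right_eq_Icc_add_one (by omega),
    Finset.sum_insert (by simp only [Finset.mem_Icc]; omega)]
  simp only [Nat.add_sub_cancel, V1]
  ring

lemma mgf_main (hu : 0 ≤ u) (hx : ∀ j i, Measurable (x j i))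
    (hbd : ∀ᵐ ω ∂μ, ∀ j ∈ Finset.Icc 1 h, ∀ i ∈ Finset.Icc 1 (2 ^ (h - j)), |x j i ω| ≤ u)
    (hmi : ∀ j ∈ Finset.Icc 1 h, ∀ i ∈ Finset.Icc 1 (2 ^ (h - j)),
      μ[x j i | Falg h x j i] =ᵐ[μ] 0)
    (s : ℝ) :
    ∀ j, j ≤ h → ∫ ω, Real.exp (s * G1 a x h j ω) ∂μ ≤ Real.exp (s ^ 2 * V1 a u h j / 2) := by
  intro j
  induction j with
  | zero =>
    intro _
    have hG : ∀ ω, G1 a x h 0 ω = 0 := fun ω => by simp [G1]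
    have hV : V1 a u h 0 = 0 := by simp [V1]
    simp [hG, hV]
  | succ j ih =>
    intro hj1
    have hJh : j + 1 ≤ h := hj1
    have houter := ih (by omega)
    have inner : ∀ i, i ≤ 2 ^ (h - (j + 1)) →
        ∫ ω, Real.exp (s * G2 a x h (j + 1) i ω) ∂μ ≤
          Real.exp (s ^ 2 * V2 a u h (j + 1) i / 2) := by
      intro i
      induction i with
      | zero =>
        intro _
        have hG : ∀ ω, G2 a x h (j + 1) 0 ω = G1 a x h j ω := by
          intro ω; rw [G2]; simp
        have hV : V2 a u h (j + 1) 0 = V1 a u h j := by rw [V2]; simp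
        simp only [hG, hV]
        exact houter
      | succ i ihi =>
        intro hi
        have hile : i ≤ 2 ^ (h - (j + 1)) := by omega
        have hXint := ihi hile
        have hm : Falg h x (j + 1) (i + 1) ≤ mΩ := Falg_le hx
        have hG2meas : Measurable[Falg h x (j + 1) (i + 1)]
            (fun ω => G2 a x h (j + 1) i ω) :=
          G2_meas_falg (by omega) rfl (by omega) hJh hile
        have hXm : StronglyMeasurable[Falg h x (j + 1) (i + 1)]
            (fun ω => Real.exp (s * G2 a x h (j + 1) i ω)) :=
          (Real.measurable_exp.comp (hG2meas.const_mul s)).stronglyMeasurable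
        have hXbd : ∀ᵐ ω ∂μ, Real.exp (s * G2 a x h (j + 1) i ω) ≤
            Real.exp (|s| * Ball a u h) := by
          filter_upwards [hbd] with ω hω
          apply Real.exp_le_exp.mpr
          calc s * G2 a x h (j + 1) i ω ≤ |s * G2 a x h (j + 1) i ω| := le_abs_self _
            _ = |s| * |G2 a x h (j + 1) i ω| := abs_mul _ _
            _ ≤ |s| * Ball a u h :=
                mul_le_mul_of_nonneg_left (G2_abs_le hu hω (by omega) hJh hile) (abs_nonneg s)
        have hYmeas : Measurable[mΩ] (Dp a x h (j + 1) (i + 1)) :=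
          (Tf_meas hx _ _).mul (hx _ _)
        have hYbd : ∀ᵐ ω ∂μ, |Dp a x h (j + 1) (i + 1) ω| ≤ bC a u h (j + 1) (i + 1) := by
          filter_upwards [hbd] with ω hω
          exact Dp_abs_le hu hω (by omega) hJh (by omega) hi
        have hY0 : μ[Dp a x h (j + 1) (i + 1)|Falg h x (j + 1) (i + 1)] =ᵐ[μ] 0 := by
          have hTm : StronglyMeasurable[Falg h x (j + 1) (i + 1)]
              (Tf a x h (j + 1) (i + 1)) :=
            (Tf_meas_falg hJh (by omega) le_rfl).stronglyMeasurable
          have hxbd : ∀ᵐ ω ∂μ, |x (j + 1) (i + 1) ω| ≤ u := by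
            filter_upwards [hbd] with ω hω
            exact hω (j + 1) (by simp only [Finset.mem_Icc]; omega) (i + 1)
              (by simp only [Finset.mem_Icc]; omega)
          have hxint : Integrable (x (j + 1) (i + 1)) μ :=
            integrable_of_ae_bdd (hx _ _).aestronglyMeasurable hxbd
          have hYint : Integrable (Tf a x h (j + 1) (i + 1) * x (j + 1) (i + 1)) μ :=
            integrable_of_ae_bdd hYmeas.aestronglyMeasurable hYbd
          have hpull := condExp_mul_of_stronglyMeasurable_left (μ := μ) hTm hYint hxint
          have hmi1 := hmi (j + 1) (by simp only [Finset.mem_Icc]; omega) (i + 1)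
            (by simp only [Finset.mem_Icc]; omega)
          refine hpull.trans ?_
          filter_upwards [hmi1] with ω hω
          simp only [Pi.mul_apply, hω, Pi.zero_apply, mul_zero]
        have hstep := mgf_step (μ := μ) hm hXm (fun ω => (Real.exp_pos _).le) hXbd
          hYmeas hYbd hY0 s
        calc ∫ ω, Real.exp (s * G2 a x h (j + 1) (i + 1) ω) ∂μ
            = ∫ ω, Real.exp (s * G2 a x h (j + 1) i ω) *
                Real.exp (s * Dp a x h (j + 1) (i + 1) ω) ∂μ := by
              congr 1; funext ω
              rw [G2_succ, mul_add, Real.exp_add]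
          _ ≤ (∫ ω, Real.exp (s * G2 a x h (j + 1) i ω) ∂μ) *
                Real.exp (s ^ 2 * (bC a u h (j + 1) (i + 1)) ^ 2 / 2) := hstep
          _ ≤ Real.exp (s ^ 2 * V2 a u h (j + 1) i / 2) *
                Real.exp (s ^ 2 * (bC a u h (j + 1) (i + 1)) ^ 2 / 2) :=
              mul_le_mul_of_nonneg_right hXint (Real.exp_pos _).le
          _ = Real.exp (s ^ 2 * V2 a u h (j + 1) (i + 1) / 2) := by
              rw [← Real.exp_add, V2_succ]; ring_nf
    have hfin := inner (2 ^ (h - (j + 1))) le_rfl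
    calc ∫ ω, Real.exp (s * G1 a x h (j + 1) ω) ∂μ
        = ∫ ω, Real.exp (s * G2 a x h (j + 1) (2 ^ (h - (j + 1))) ω) ∂μ := by
          congr 1; funext ω; rw [G1_eq_G2]
      _ ≤ Real.exp (s ^ 2 * V2 a u h (j + 1) (2 ^ (h - (j + 1))) / 2) := hfin
      _ = Real.exp (s ^ 2 * V1 a u h (j + 1) / 2) := by rw [V1_eq_V2]

end MGF

section Chernoff
variable [mΩ : MeasurableSpace Ω] {μ : Measure Ω} [IsProbabilityMeasure μ]

lemma chernoff {M : Ω → ℝ} (hMmeas : Measurable M) {B : ℝ} (hMbd : ∀ᵐ ω ∂μ, |M ω| ≤ B)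
    {V : ℝ} (hmgf : ∀ s : ℝ, ∫ ω, Real.exp (s * M ω) ∂μ ≤ Real.exp (s ^ 2 * V / 2))
    {Vb t : ℝ} (hV : V ≤ Vb) (hVb : 0 < Vb) (ht : 0 < t) :
    (μ {ω | t ≤ M ω}).toReal ≤ Real.exp (-(t ^ 2) / (2 * Vb)) := by
  set s : ℝ := t / Vb with hs
  have hspos : 0 < s := div_pos ht hVb
  have hfmeas : Measurable fun ω => Real.exp (s * M ω) :=
    Real.measurable_exp.comp (hMmeas.const_mul s)
  have hfint : Integrable (fun ω => Real.exp (s * M ω)) μ := by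
    refine integrable_of_ae_bdd hfmeas.aestronglyMeasurable (C := Real.exp (|s| * B)) ?_
    filter_upwards [hMbd] with ω hω
    rw [abs_of_pos (Real.exp_pos _)]
    apply Real.exp_le_exp.mpr
    calc s * M ω ≤ |s * M ω| := le_abs_self _
      _ = |s| * |M ω| := abs_mul _ _
      _ ≤ |s| * B := mul_le_mul_of_nonneg_left hω (abs_nonneg s)
  have hmarkov := mul_meas_ge_le_integral_of_nonneg
    (Filter.Eventually.of_forall fun ω => (Real.exp_pos (s * M ω)).le) hfint (Real.exp (s * t))
  have hsubset : {ω | t ≤ M ω} ⊆ {ω | Real.exp (s * t) ≤ Real.exp (s * M ω)} := by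
    intro ω hω
    exact Real.exp_le_exp.mpr (mul_le_mul_of_nonneg_left hω hspos.le)
  have hmono : (μ {ω | t ≤ M ω}).toReal ≤
      (μ {ω | Real.exp (s * t) ≤ Real.exp (s * M ω)}).toReal := by
    apply ENNReal.toReal_mono (measure_ne_top μ _) (measure_mono hsubset)
  have hbd2 : Real.exp (s * t) * (μ {ω | Real.exp (s * t) ≤ Real.exp (s * M ω)}).toReal ≤
      Real.exp (s ^ 2 * V / 2) := le_trans hmarkov (hmgf s)
  have h3 : (μ {ω | Real.exp (s * t) ≤ Real.exp (s * M ω)}).toReal ≤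
      Real.exp (s ^ 2 * V / 2) / Real.exp (s * t) := by
    rw [le_div_iff₀ (Real.exp_pos _)]
    linarith [hbd2]
  refine hmono.trans (h3.trans ?_)
  rw [div_eq_mul_inv, ← Real.exp_neg, ← Real.exp_add]
  apply Real.exp_le_exp.mpr
  have h4 : s ^ 2 * V / 2 ≤ s ^ 2 * Vb / 2 := by nlinarith [sq_nonneg s]
  have h5 : s ^ 2 * Vb / 2 + -(s * t) = -(t ^ 2) / (2 * Vb) := by
    rw [hs]; field_simp; ring
  linarith

end Chernoff

lemma sum_Af (a : ℕ → ℝ) {h j : ℕ} (hj1 : 1 ≤ j) (hj : j ≤ h) :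
    ∑ i ∈ Finset.Icc 1 (2 ^ (h - j)), Af a h j i = ∑ l ∈ Finset.Icc 1 (2 ^ h), |a l| := by
  simp only [Af, fib]
  apply Finset.sum_fiberwise_of_maps_to
  intro l hl
  simp only [Finset.mem_Icc] at hl ⊢
  exact ⟨ci_ge_one hl.1 j, ci_le hl.2 hj⟩

lemma V1_le {a : ℕ → ℝ} {u : ℝ} (hu : 0 < u) {h : ℕ} :
    V1 a u h h ≤ (∑ l ∈ Finset.Icc 1 (2 ^ h), |a l|) ^ 2 * u * ((1 + u) ^ (2 * h) - 1) / 2 := by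
  set SA : ℝ := ∑ l ∈ Finset.Icc 1 (2 ^ h), |a l| with hSA
  have hSA0 : 0 ≤ SA := Finset.sum_nonneg fun _ _ => abs_nonneg _
  set w : ℝ := (1 + u) ^ 2 with hw
  have step1 : ∀ j ∈ Finset.Icc 1 h, ∑ i ∈ Finset.Icc 1 (2 ^ (h - j)), (bC a u h j i) ^ 2 ≤
      u ^ 2 * w ^ (j - 1) * SA ^ 2 := by
    intro j hj
    simp only [Finset.mem_Icc] at hj
    have hAf_le : ∀ i ∈ Finset.Icc 1 (2 ^ (h - j)), Af a h j i ≤ SA := by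
      intro i hi
      rw [hSA, ← sum_Af a hj.1 hj.2]
      exact Finset.single_le_sum (fun i' _ => Af_nonneg a h j i') hi
    have : ∑ i ∈ Finset.Icc 1 (2 ^ (h - j)), (Af a h j i) ^ 2 ≤ SA ^ 2 := by
      calc ∑ i ∈ Finset.Icc 1 (2 ^ (h - j)), (Af a h j i) ^ 2
          ≤ ∑ i ∈ Finset.Icc 1 (2 ^ (h - j)), Af a h j i * SA := by
            apply Finset.sum_le_sum
            intro i hi
            rw [sq]
            exact mul_le_mul_of_nonneg_left (hAf_le i hi) (Af_nonneg a h j i)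
        _ = (∑ i ∈ Finset.Icc 1 (2 ^ (h - j)), Af a h j i) * SA := by rw [Finset.sum_mul]
        _ = SA * SA := by rw [sum_Af a hj.1 hj.2]
        _ = SA ^ 2 := (sq SA).symm
    calc ∑ i ∈ Finset.Icc 1 (2 ^ (h - j)), (bC a u h j i) ^ 2
        = u ^ 2 * w ^ (j - 1) * ∑ i ∈ Finset.Icc 1 (2 ^ (h - j)), (Af a h j i) ^ 2 := by
          rw [Finset.mul_sum]
          apply Finset.sum_congr rfl
          intro i _
          rw [bC, hw, ← pow_mul]
          ring
      _ ≤ u ^ 2 * w ^ (j - 1) * SA ^ 2 := by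
          apply mul_le_mul_of_nonneg_left this
          positivity
  have hgeo : (∑ j ∈ Finset.Icc 1 h, w ^ (j - 1)) * (w - 1) = w ^ h - 1 := by
    have : ∀ n : ℕ, ∑ j ∈ Finset.Icc 1 n, w ^ (j - 1) = ∑ k ∈ Finset.range n, w ^ k := by
      intro n
      induction n with
      | zero => simp
      | succ n ihn =>
        rw [← Finset.insert_Icc_right_eq_Icc_add_one (by omega),
          Finset.sum_insert (by simp only [Finset.mem_Icc]; omega),
          Finset.sum_range_succ, ihn, Nat.add_sub_cancel, add_comm]
    rw [this h, geom_sum_mul]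
  have hgeo_nonneg : 0 ≤ ∑ j ∈ Finset.Icc 1 h, w ^ (j - 1) :=
    Finset.sum_nonneg fun j _ => pow_nonneg (by positivity) _
  set Sg : ℝ := ∑ j ∈ Finset.Icc 1 h, w ^ (j - 1) with hSg
  have hV1 : V1 a u h h ≤ u ^ 2 * SA ^ 2 * Sg := by
    rw [V1, hSg, Finset.mul_sum]
    apply Finset.sum_le_sum
    intro j hj
    calc ∑ i' ∈ Finset.Icc 1 (2 ^ (h - j)), bC a u h j i' ^ 2
        ≤ u ^ 2 * w ^ (j - 1) * SA ^ 2 := step1 j hj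
      _ = u ^ 2 * SA ^ 2 * w ^ (j - 1) := by ring
  have hwh : w ^ h = (1 + u) ^ (2 * h) := by rw [hw, ← pow_mul, mul_comm 2 h, pow_mul]
  have hkey : u ^ 2 * Sg ≤ u * (w ^ h - 1) / 2 := by
    have h1 : w - 1 = 2 * u + u ^ 2 := by rw [hw]; ring
    nlinarith [hgeo, hgeo_nonneg, hu.le, sq_nonneg u, mul_nonneg hgeo_nonneg (sq_nonneg u),
      mul_nonneg (mul_nonneg hgeo_nonneg hu.le) (sq_nonneg u)]
  calc V1 a u h h ≤ u ^ 2 * SA ^ 2 * Sg := hV1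
    _ = SA ^ 2 * (u ^ 2 * Sg) := by ring
    _ ≤ SA ^ 2 * (u * (w ^ h - 1) / 2) := mul_le_mul_of_nonneg_left hkey (sq_nonneg SA)
    _ = SA ^ 2 * u * ((1 + u) ^ (2 * h) - 1) / 2 := by rw [hwh]; ring

end PairwiseSR

/-- `γ_m(x) = (1+x)^m - 1`. -/
noncomputable def gammaFn (m : ℕ) (x : ℝ) : ℝ := (1 + x) ^ m - 1

/-- Probabilistic error bound for pairwise (binary-tree) summation of
`n = 2^h` numbers under limited-precision stochastic rounding `SR_{p,r}`: the
rounding errors `δ^j_i` are bounded by `u_p = 2^(1-p)`, their biases `β^j_i`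
by `u_{p+r} = 2^(1-p-r)`, and the centered errors `α^j_i = δ^j_i - β^j_i`
(bounded by `u_p`) are mean independent in the order of increasing level `j`
(and increasing index `i` within each level). With probability at least
`1 - λ`, `|ŝ - s| ≤ (∑|a_i|)(√(u_p γ_{2h}(u_p)) √(ln(2/λ)) +
γ_h(u_p+u_{p+r}) - γ_h(u_p))`, where
`ŝ = ∑_{i=1}^{2^h} a_i ∏_{j=1}^h (1 + δ^j_{⌈i/2^j⌉})` and
`(i + 2^j - 1) / 2^j` is the natural-number ceiling `⌈i / 2^j⌉`. -/
theorem pairwise_limited_precision_sr_bound {Ω : Type*} [MeasurableSpace Ω]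
    (μ : Measure Ω) [IsProbabilityMeasure μ]
    (h p r : ℕ) (hh : 1 ≤ h) (hp : 1 ≤ p) (hr : 1 ≤ r)
    (a : ℕ → ℝ) (δ β : ℕ → ℕ → Ω → ℝ)
    (hmeasδ : ∀ j i, Measurable (δ j i)) (hmeasβ : ∀ j i, Measurable (β j i))
    (hδbd : ∀ j ∈ Finset.Icc 1 h, ∀ i ∈ Finset.Icc 1 (2 ^ (h - j)),
      ∀ᵐ ω ∂μ, |δ j i ω| ≤ (2 : ℝ) ^ (1 - (p : ℤ)))
    (hβbd : ∀ j ∈ Finset.Icc 1 h, ∀ i ∈ Finset.Icc 1 (2 ^ (h - j)),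
      ∀ᵐ ω ∂μ, |β j i ω| ≤ (2 : ℝ) ^ (1 - (p : ℤ) - (r : ℤ)))
    (hαbd : ∀ j ∈ Finset.Icc 1 h, ∀ i ∈ Finset.Icc 1 (2 ^ (h - j)),
      ∀ᵐ ω ∂μ, |δ j i ω - β j i ω| ≤ (2 : ℝ) ^ (1 - (p : ℤ)))
    (hmi : ∀ j ∈ Finset.Icc 1 h, ∀ i ∈ Finset.Icc 1 (2 ^ (h - j)),
      μ[(fun ω => δ j i ω - β j i ω) | ⨆ q ∈ {q : ℕ × ℕ |
            (1 ≤ q.1 ∧ q.1 ≤ h ∧ 1 ≤ q.2 ∧ q.2 ≤ 2 ^ (h - q.1)) ∧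
            (q.1 < j ∨ (q.1 = j ∧ q.2 < i))},
          MeasurableSpace.comap (fun ω => δ q.1 q.2 ω - β q.1 q.2 ω)
            inferInstance] =ᵐ[μ] 0)
    (lam : ℝ) (hlam0 : 0 < lam) (hlam1 : lam < 1) :
    ENNReal.ofReal (1 - lam) ≤
      μ {ω | |(∑ i ∈ Finset.Icc 1 (2 ^ h),
            a i * ∏ j ∈ Finset.Icc 1 h, (1 + δ j ((i + 2 ^ j - 1) / 2 ^ j) ω)) -
          ∑ i ∈ Finset.Icc 1 (2 ^ h), a i| ≤
        (∑ i ∈ Finset.Icc 1 (2 ^ h), |a i|) *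
          (Real.sqrt ((2 : ℝ) ^ (1 - (p : ℤ)) *
              gammaFn (2 * h) ((2 : ℝ) ^ (1 - (p : ℤ)))) *
            Real.sqrt (Real.log (2 / lam)) +
          gammaFn h
            ((2 : ℝ) ^ (1 - (p : ℤ)) + (2 : ℝ) ^ (1 - (p : ℤ) - (r : ℤ))) -
          gammaFn h ((2 : ℝ) ^ (1 - (p : ℤ))))} := by
  classical
  have hci : ∀ i j : ℕ, (i + 2 ^ j - 1) / 2 ^ j = PairwiseSR.ci i j := fun _ _ => rfl
  simp only [hci, gammaFn]
  set u : ℝ := (2 : ℝ) ^ (1 - (p : ℤ)) with hudef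
  set v : ℝ := (2 : ℝ) ^ (1 - (p : ℤ) - (r : ℤ)) with hvdef
  have hu : 0 < u := by positivity
  have hv : 0 < v := by positivity
  set x : ℕ → ℕ → Ω → ℝ := fun j i ω => δ j i ω - β j i ω with hxdef
  set SA : ℝ := ∑ i ∈ Finset.Icc 1 (2 ^ h), |a i| with hSAdef
  have hSAnn : 0 ≤ SA := Finset.sum_nonneg fun _ _ => abs_nonneg _
  rcases eq_or_lt_of_le hSAnn with hSA0 | hSApos
  · -- degenerate case : all a i vanish
    have hz : ∀ i ∈ Finset.Icc 1 (2 ^ h), a i = 0 := by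
      intro i hi
      exact abs_eq_zero.1
        ((Finset.sum_eq_zero_iff_of_nonneg fun _ _ => abs_nonneg _).1 hSA0.symm i hi)
    have hset : {ω | |(∑ i ∈ Finset.Icc 1 (2 ^ h),
          a i * ∏ j ∈ Finset.Icc 1 h, (1 + δ j (PairwiseSR.ci i j) ω)) -
          ∑ i ∈ Finset.Icc 1 (2 ^ h), a i| ≤
          SA * (Real.sqrt (u * ((1 + u) ^ (2 * h) - 1)) * Real.sqrt (Real.log (2 / lam)) +
            ((1 + (u + v)) ^ h - 1) - ((1 + u) ^ h - 1))} = Set.univ := by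
      apply Set.eq_univ_of_forall
      intro ω
      simp only [Set.mem_setOf_eq]
      rw [Finset.sum_eq_zero (fun i hi => by rw [hz i hi, zero_mul]),
        Finset.sum_eq_zero hz, ← hSA0]
      simp
    rw [hset, measure_univ]
    exact ENNReal.ofReal_le_one.mpr (by linarith)
  · have hx : ∀ j i, Measurable (x j i) := fun j i => (hmeasδ j i).sub (hmeasβ j i)
    have hae : ∀ᵐ ω ∂μ, ∀ j, ∀ i, j ∈ Finset.Icc 1 h → i ∈ Finset.Icc 1 (2 ^ (h - j)) →
        |δ j i ω| ≤ u ∧ |β j i ω| ≤ v ∧ |x j i ω| ≤ u := by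
      rw [MeasureTheory.ae_all_iff]
      intro j
      rw [MeasureTheory.ae_all_iff]
      intro i
      by_cases hj : j ∈ Finset.Icc 1 h
      · by_cases hi : i ∈ Finset.Icc 1 (2 ^ (h - j))
        · filter_upwards [hδbd j hj i hi, hβbd j hj i hi, hαbd j hj i hi] with ω h1 h2 h3
          exact fun _ _ => ⟨h1, h2, h3⟩
        · filter_upwards with ω _ hi'
          exact absurd hi' hi
      · filter_upwards with ω hj'
        exact absurd hj' hj
    have hbdx : ∀ᵐ ω ∂μ, ∀ j ∈ Finset.Icc 1 h, ∀ i ∈ Finset.Icc 1 (2 ^ (h - j)),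
        |x j i ω| ≤ u := by
      filter_upwards [hae] with ω hω j hj i hi
      exact (hω j i hj hi).2.2
    have hmi' : ∀ j ∈ Finset.Icc 1 h, ∀ i ∈ Finset.Icc 1 (2 ^ (h - j)),
        μ[x j i|PairwiseSR.Falg h x j i] =ᵐ[μ] 0 := hmi
    have hmgf := fun s => PairwiseSR.mgf_main (μ := μ) (a := a) hu.le hx hbdx hmi' s h le_rfl
    have hMmeas : Measurable (PairwiseSR.G1 a x h h) := by
      apply Finset.measurable_sum
      intro j _
      apply Finset.measurable_sum
      intro i _
      exact (PairwiseSR.Tf_meas hx j i).mul (hx j i)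
    have hMbd : ∀ᵐ ω ∂μ, |PairwiseSR.G1 a x h h ω| ≤ PairwiseSR.Ball a u h := by
      filter_upwards [hbdx] with ω hω
      exact PairwiseSR.G1_abs_le hu.le hω
    -- constants
    set γ2 : ℝ := (1 + u) ^ (2 * h) - 1 with hγ2def
    have hγ2pos : 0 < γ2 := by
      have : (1:ℝ) < (1 + u) ^ (2 * h) :=
        one_lt_pow₀ (by linarith) (by omega)
      simp only [hγ2def]; linarith
    set Vb : ℝ := SA ^ 2 * u * γ2 / 2 with hVbdef
    have hVb : 0 < Vb :=
      div_pos (mul_pos (mul_pos (pow_pos hSApos 2) hu) hγ2pos) two_pos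
    have hVle : PairwiseSR.V1 a u h h ≤ Vb := PairwiseSR.V1_le hu
    set L : ℝ := Real.log (2 / lam) with hLdef
    have hLpos : 0 < L := Real.log_pos (by rw [lt_div_iff₀ hlam0]; linarith)
    set t : ℝ := SA * Real.sqrt (u * γ2) * Real.sqrt L with htdef
    have ht : 0 < t :=
      mul_pos (mul_pos hSApos (Real.sqrt_pos.2 (mul_pos hu hγ2pos))) (Real.sqrt_pos.2 hLpos)
    have ht2 : t ^ 2 = 2 * Vb * L := by
      rw [htdef, hVbdef, mul_pow, mul_pow, Real.sq_sqrt (mul_pos hu hγ2pos).le,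
        Real.sq_sqrt hLpos.le]
      ring
    have hexp : Real.exp (-(t ^ 2) / (2 * Vb)) = lam / 2 := by
      rw [ht2, show -(2 * Vb * L) / (2 * Vb) = -L by field_simp, Real.exp_neg, hLdef,
        Real.exp_log (by positivity), inv_div]
    have hup := PairwiseSR.chernoff hMmeas hMbd hmgf hVle hVb ht
    have hmgfneg : ∀ s : ℝ, ∫ ω, Real.exp (s * (-(PairwiseSR.G1 a x h h ω))) ∂μ ≤
        Real.exp (s ^ 2 * PairwiseSR.V1 a u h h / 2) := by
      intro s
      have := hmgf (-s)
      simpa [neg_mul, mul_neg, neg_neg, neg_sq] using this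
    have hMbdneg : ∀ᵐ ω ∂μ, |(-(PairwiseSR.G1 a x h h ω))| ≤ PairwiseSR.Ball a u h := by
      filter_upwards [hMbd] with ω hω
      rwa [abs_neg]
    have hlow := PairwiseSR.chernoff (M := fun ω => -(PairwiseSR.G1 a x h h ω)) hMmeas.neg
      hMbdneg hmgfneg hVle hVb ht
    have hhalf : (0:ℝ) ≤ lam / 2 := by linarith
    have hup' : μ {ω | t ≤ PairwiseSR.G1 a x h h ω} ≤ ENNReal.ofReal (lam / 2) := by
      refine (ENNReal.le_ofReal_iff_toReal_le (measure_ne_top μ _) hhalf).2 ?_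
      exact hup.trans (le_of_eq hexp)
    have hlow' : μ {ω | t ≤ -(PairwiseSR.G1 a x h h ω)} ≤ ENNReal.ofReal (lam / 2) := by
      refine (ENNReal.le_ofReal_iff_toReal_le (measure_ne_top μ _) hhalf).2 ?_
      exact hlow.trans (le_of_eq hexp)
    -- the target event
    set S : Set Ω := {ω | |(∑ i ∈ Finset.Icc 1 (2 ^ h),
          a i * ∏ j ∈ Finset.Icc 1 h, (1 + δ j (PairwiseSR.ci i j) ω)) -
          ∑ i ∈ Finset.Icc 1 (2 ^ h), a i| ≤
          SA * (Real.sqrt (u * γ2) * Real.sqrt L +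
            ((1 + (u + v)) ^ h - 1) - ((1 + u) ^ h - 1))} with hSdef
    have hfinal : ∀ᵐ ω ∂μ, ω ∉ {ω | t ≤ PairwiseSR.G1 a x h h ω} →
        ω ∉ {ω | t ≤ -(PairwiseSR.G1 a x h h ω)} → ω ∈ S := by
      filter_upwards [hae] with ω hω h1 h2
      simp only [Set.mem_setOf_eq, not_le] at h1 h2
      have hMlt : |PairwiseSR.G1 a x h h ω| < t := abs_lt.2 ⟨by linarith, h1⟩
      have hid : (∑ l ∈ Finset.Icc 1 (2 ^ h),
          a l * ∏ j ∈ Finset.Icc 1 h, (1 + x j (PairwiseSR.ci l j) ω)) -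
          ∑ l ∈ Finset.Icc 1 (2 ^ h), a l = PairwiseSR.G1 a x h h ω := by
        rw [PairwiseSR.identity h a x ω]
        simp only [PairwiseSR.G1, PairwiseSR.Dp]
      have hbias : |(∑ l ∈ Finset.Icc 1 (2 ^ h),
          a l * ∏ j ∈ Finset.Icc 1 h, (1 + δ j (PairwiseSR.ci l j) ω)) -
          ∑ l ∈ Finset.Icc 1 (2 ^ h),
          a l * ∏ j ∈ Finset.Icc 1 h, (1 + x j (PairwiseSR.ci l j) ω)| ≤
          SA * ((1 + u + v) ^ h - (1 + u) ^ h) := by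
        rw [← Finset.sum_sub_distrib]
        refine (Finset.abs_sum_le_sum_abs _ _).trans ?_
        rw [hSAdef, Finset.sum_mul]
        apply Finset.sum_le_sum
        intro l hl
        have hmemb : ∀ j ∈ Finset.Icc 1 h, PairwiseSR.ci l j ∈
            Finset.Icc 1 (2 ^ (h - j)) := by
          intro j hj
          simp only [Finset.mem_Icc] at hj hl ⊢
          exact ⟨PairwiseSR.ci_ge_one hl.1 j, PairwiseSR.ci_le hl.2 hj.2⟩
        have hbb := PairwiseSR.bias_bound u v hu.le hv.le h
          (fun j => x j (PairwiseSR.ci l j) ω) (fun j => δ j (PairwiseSR.ci l j) ω)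
          (fun j hj => (hω j (PairwiseSR.ci l j) hj (hmemb j hj)).2.2)
          (fun j hj => (hω j (PairwiseSR.ci l j) hj (hmemb j hj)).1)
          (fun j hj => by
            have : δ j (PairwiseSR.ci l j) ω - x j (PairwiseSR.ci l j) ω =
                β j (PairwiseSR.ci l j) ω := by simp [hxdef]
            rw [this]
            exact (hω j (PairwiseSR.ci l j) hj (hmemb j hj)).2.1)
        calc |a l * ∏ j ∈ Finset.Icc 1 h, (1 + δ j (PairwiseSR.ci l j) ω) -
              a l * ∏ j ∈ Finset.Icc 1 h, (1 + x j (PairwiseSR.ci l j) ω)|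
            = |a l| * |∏ j ∈ Finset.Icc 1 h, (1 + δ j (PairwiseSR.ci l j) ω) -
              ∏ j ∈ Finset.Icc 1 h, (1 + x j (PairwiseSR.ci l j) ω)| := by
              rw [← abs_mul]; ring_nf
          _ ≤ |a l| * ((1 + u + v) ^ h - (1 + u) ^ h) :=
              mul_le_mul_of_nonneg_left hbb (abs_nonneg _)
      simp only [hSdef, Set.mem_setOf_eq]
      have hdecomp : (∑ i ∈ Finset.Icc 1 (2 ^ h),
          a i * ∏ j ∈ Finset.Icc 1 h, (1 + δ j (PairwiseSR.ci i j) ω)) -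
          ∑ i ∈ Finset.Icc 1 (2 ^ h), a i =
          ((∑ l ∈ Finset.Icc 1 (2 ^ h),
            a l * ∏ j ∈ Finset.Icc 1 h, (1 + δ j (PairwiseSR.ci l j) ω)) -
          ∑ l ∈ Finset.Icc 1 (2 ^ h),
            a l * ∏ j ∈ Finset.Icc 1 h, (1 + x j (PairwiseSR.ci l j) ω)) +
          PairwiseSR.G1 a x h h ω := by
        rw [← hid]; ring
      rw [hdecomp]
      refine (abs_add_le _ _).trans ?_
      have heq : SA * ((1 + u + v) ^ h - (1 + u) ^ h) + t =
          SA * (Real.sqrt (u * γ2) * Real.sqrt L +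
            ((1 + (u + v)) ^ h - 1) - ((1 + u) ^ h - 1)) := by
        rw [htdef]; ring
      linarith [hbias, hMlt.le]
    have hsub2 : ∀ᵐ ω ∂μ, ω ∈ Sᶜ → ω ∈ ({ω | t ≤ PairwiseSR.G1 a x h h ω} ∪
        {ω | t ≤ -(PairwiseSR.G1 a x h h ω)}) := by
      filter_upwards [hfinal] with ω hω hmem
      by_contra hcon
      simp only [Set.mem_union, not_or] at hcon
      exact hmem (hω hcon.1 hcon.2)
    have hcompl : μ Sᶜ ≤ ENNReal.ofReal lam := by
      calc μ Sᶜ ≤ μ ({ω | t ≤ PairwiseSR.G1 a x h h ω} ∪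
            {ω | t ≤ -(PairwiseSR.G1 a x h h ω)}) := measure_mono_ae hsub2
        _ ≤ μ {ω | t ≤ PairwiseSR.G1 a x h h ω} +
            μ {ω | t ≤ -(PairwiseSR.G1 a x h h ω)} := measure_union_le _ _
        _ ≤ ENNReal.ofReal (lam / 2) + ENNReal.ofReal (lam / 2) := add_le_add hup' hlow'
        _ = ENNReal.ofReal lam := by
            rw [← ENNReal.ofReal_add hhalf hhalf]
            norm_num
    have h1 : (1 : ENNReal) ≤ μ S + ENNReal.ofReal lam := by
      calc (1 : ENNReal) = μ Set.univ := measure_univ.symm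
        _ = μ (S ∪ Sᶜ) := by rw [Set.union_compl_self]
        _ ≤ μ S + μ Sᶜ := measure_union_le _ _
        _ ≤ μ S + ENNReal.ofReal lam := add_le_add le_rfl hcompl
    calc ENNReal.ofReal (1 - lam) = (1 : ENNReal) - ENNReal.ofReal lam := by
          rw [ENNReal.ofReal_sub _ hlam0.le, ENNReal.ofReal_one]
      _ ≤ μ S := tsub_le_iff_right.2 h1
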